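/- arXiv:2109.13537 — 3 statements merged into one kernel-verified Lean document; each statement's English description precedes it below -/
import Mathlib

section
/- Let {Ui}_{i=1}^{n1} be a set of d1×d1 unitary matrices and {Vj}_{j=1}^{n2} a set of d2×d2 unitary matrices such that no d1×d1 unitary matrix is Hilbert–Schmidt orthogonal to all Ui, and no d2×d2 unitary matrix is Hilbert–Schmidt orthogonal to all Vj. Then there is no product unitary matrix U⊗V (U a d1×d1 unitary, V a d2×d2 unitary) that is Hilbert–Schmidt orthogonal to all Ui⊗Vj. -/
open Matrix Kronecker

lemma kron_conjTranspose {m n : Type*} (A : Matrix m m ℂ) (B : Matrix n n ℂ) :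
    (A ⊗ₖ B)ᴴ = Aᴴ ⊗ₖ Bᴴ := by
  ext i j
  simp [Matrix.conjTranspose_apply, Matrix.kroneckerMap_apply, _root_.map_mul]

theorem tensor_of_UUO_sets_is_UPUOB (d1 d2 n1 n2 : ℕ)
    (U : Fin n1 → Matrix (Fin d1) (Fin d1) ℂ)
    (V : Fin n2 → Matrix (Fin d2) (Fin d2) ℂ)
    (hU : ∀ i, U i ∈ Matrix.unitaryGroup (Fin d1) ℂ)
    (hV : ∀ j, V j ∈ Matrix.unitaryGroup (Fin d2) ℂ)
    (hUUO₁ : ¬ ∃ W ∈ Matrix.unitaryGroup (Fin d1) ℂ, ∀ i, (Wᴴ * U i).trace = 0)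
    (hUUO₂ : ¬ ∃ X ∈ Matrix.unitaryGroup (Fin d2) ℂ, ∀ j, (Xᴴ * V j).trace = 0) :
    ¬ ∃ W ∈ Matrix.unitaryGroup (Fin d1) ℂ, ∃ X ∈ Matrix.unitaryGroup (Fin d2) ℂ,
      ∀ i j, ((W ⊗ₖ X)ᴴ * (U i ⊗ₖ V j)).trace = 0 := by
  rintro ⟨W, hW, X, hX, h⟩
  have key : ∀ i j, (Wᴴ * U i).trace * (Xᴴ * V j).trace = 0 := by
    intro i j
    have := h i j
    rwa [kron_conjTranspose, ← mul_kronecker_mul, trace_kronecker] at this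
  push_neg at hUUO₁
  obtain ⟨i, hi⟩ := hUUO₁ W hW
  exact hUUO₂ ⟨X, hX, fun j => by
    have := key i j
    rcases mul_eq_zero.mp this with h' | h'
    · exact absurd h' hi
    · exact h'⟩
end

section
/- Let S = {⊗_{i=1}^m U_{i,j} : j = 1,...,n} be a finite set of m-partite product matrices, with U_{i,j} in the space of d_i×d_i matrices. Then there exists a nonzero product matrix W = ⊗_{i=1}^m W_i Hilbert–Schmidt orthogonal to every element of S if and only if there exists a partition of {1,...,n} into disjoint sets T_1,...,T_m such that for each i, the span of {U_{i,j} : j ∈ T_i} has dimension strictly less than d_i². -/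
open Matrix Module

lemma key_iff (d : ℕ) (S : Set (Matrix (Fin d) (Fin d) ℂ)) :
    (∃ W : Matrix (Fin d) (Fin d) ℂ, W ≠ 0 ∧ ∀ M ∈ S, (Wᴴ * M).trace = 0) ↔
    Module.finrank ℂ (Submodule.span ℂ S) < d ^ 2 := by
  have hfr : Module.finrank ℂ (Matrix (Fin d) (Fin d) ℂ) = d ^ 2 := by
    rw [Module.finrank_matrix]; simp [sq]
  constructor
  · rintro ⟨W, hW, hS⟩
    set g : Matrix (Fin d) (Fin d) ℂ →ₗ[ℂ] ℂ :=
      (Matrix.traceLinearMap (Fin d) ℂ ℂ).comp (LinearMap.mulLeft ℂ Wᴴ) with hg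
    have hgW : g W ≠ 0 := by
      simp only [hg, LinearMap.comp_apply, LinearMap.mulLeft_apply, traceLinearMap_apply]
      have : (Wᴴ * W).trace = ((∑ a, ∑ b, Complex.normSq (W b a) : ℝ) : ℂ) := by
        simp only [trace, diag, mul_apply, conjTranspose_apply, Matrix.star_apply,
          Complex.star_def, ← Complex.normSq_eq_conj_mul_self]
        push_cast
        rfl
      rw [this]
      intro h
      apply hW
      rw [Complex.ofReal_eq_zero] at h
      have := (Finset.sum_eq_zero_iff_of_nonneg (fun a _ => Finset.sum_nonneg
        (fun b _ => Complex.normSq_nonneg _))).mp h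
      ext b a
      have h2 := (Finset.sum_eq_zero_iff_of_nonneg
        (fun b _ => Complex.normSq_nonneg _)).mp (this a (Finset.mem_univ a)) b (Finset.mem_univ b)
      simpa using Complex.normSq_eq_zero.mp h2
    have hle : Submodule.span ℂ S ≤ LinearMap.ker g := by
      rw [Submodule.span_le]
      intro M hM
      simpa [hg] using hS M hM
    have hker : LinearMap.ker g < ⊤ := lt_top_iff_ne_top.mpr (by
      intro h
      exact hgW (by simpa using (h ▸ Submodule.mem_top : W ∈ LinearMap.ker g)))
    calc Module.finrank ℂ (Submodule.span ℂ S) ≤ Module.finrank ℂ (LinearMap.ker g) :=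
          Submodule.finrank_mono hle
      _ < Module.finrank ℂ (Matrix (Fin d) (Fin d) ℂ) := Submodule.finrank_lt hker.ne
      _ = d ^ 2 := hfr
  · intro h
    have hlt : Submodule.span ℂ S < ⊤ := by
      rw [lt_top_iff_ne_top]
      intro htop
      rw [htop] at h
      simp [finrank_top, hfr] at h
    obtain ⟨f, hf, hfbot⟩ := Submodule.exists_dual_map_eq_bot_of_lt_top hlt inferInstance
    set W : Matrix (Fin d) (Fin d) ℂ :=
      Matrix.of (fun b a => starRingEnd ℂ (f (Matrix.single b a 1))) with hWdef
    have hWtr : ∀ M, (Wᴴ * M).trace = f M := by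
      intro M
      conv_rhs => rw [matrix_eq_sum_single M]
      rw [map_sum]
      simp only [map_sum]
      rw [trace]
      simp only [diag_apply, mul_apply, conjTranspose_apply, Matrix.star_apply, hWdef, of_apply,
        Complex.star_def, Complex.conj_conj]
      rw [Finset.sum_comm]
      congr 1
      ext b
      congr 1
      ext a
      have : Matrix.single b a (M b a) = M b a • Matrix.single b a 1 := by
        rw [smul_single, smul_eq_mul, mul_one]
      rw [this, _root_.map_smul, smul_eq_mul, mul_comm]
    refine ⟨W, ?_, ?_⟩
    · intro hW0
      apply hf
      ext M
      have := hWtr M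
      rw [hW0] at this
      simpa using this.symm
    · intro M hM
      rw [hWtr]
      have : f M ∈ Submodule.map f (Submodule.span ℂ S) :=
        Submodule.mem_map_of_mem (Submodule.subset_span hM)
      rw [hfbot] at this
      simpa using this

theorem extendible_iff_partition (m n : ℕ) (d : Fin m → ℕ)
    (U : (i : Fin m) → Fin n → Matrix (Fin (d i)) (Fin (d i)) ℂ) :
    (∃ W : (i : Fin m) → Matrix (Fin (d i)) (Fin (d i)) ℂ,
        (∀ i, W i ≠ 0) ∧ ∀ j, (∏ i, ((W i)ᴴ * U i j).trace) = 0) ↔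
    (∃ T : Fin n → Fin m, ∀ i,
        Module.finrank ℂ (Submodule.span ℂ {M | ∃ j, T j = i ∧ U i j = M}) < (d i) ^ 2) := by
  constructor
  · rintro ⟨W, hW, hprod⟩
    have hex : ∀ j, ∃ i, ((W i)ᴴ * U i j).trace = 0 := by
      intro j
      obtain ⟨i, -, hi⟩ := Finset.prod_eq_zero_iff.mp (hprod j)
      exact ⟨i, hi⟩
    choose T hT using hex
    refine ⟨T, fun i => ?_⟩
    rw [← key_iff]
    refine ⟨W i, hW i, ?_⟩
    rintro M ⟨j, hj, rfl⟩
    rw [← hj]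
    exact hT j
  · rintro ⟨T, hT⟩
    have hex : ∀ i, ∃ W : Matrix (Fin (d i)) (Fin (d i)) ℂ, W ≠ 0 ∧
        ∀ M ∈ {M | ∃ j, T j = i ∧ U i j = M}, (Wᴴ * M).trace = 0 :=
      fun i => (key_iff _ _).mpr (hT i)
    choose W hW0 hWtr using hex
    refine ⟨W, hW0, fun j => ?_⟩
    exact Finset.prod_eq_zero (Finset.mem_univ (T j)) (hWtr (T j) (U (T j) j) ⟨j, rfl, rfl⟩)
end

section
/- Let U1,...,U12 be the two-qubit product matrices: U1 = (1/√2)σx⊗(σx−σy), U2 = (1/√2)(σx−σy)⊗σz, U3 = (1/√2)σz⊗(−σy+σz), U4 = (1/√2)(−σy+σz)⊗σx, U5 = (1/3)(σx+σy+σz)⊗(σx+σy+σz), U6,...,U12 = I⊗I, I⊗σx, I⊗σy, I⊗σz, σx⊗I, σy⊗I, σz⊗I. If a product matrix W⊗X (W, X complex 2×2 matrices) satisfies Tr((W⊗X)†Ui) = 0 for all i = 1,...,12, then W = 0 or X = 0. -/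
open Matrix Kronecker

noncomputable section

def σx : Matrix (Fin 2) (Fin 2) ℂ := !![0, 1; 1, 0]
def σy : Matrix (Fin 2) (Fin 2) ℂ := !![0, -Complex.I; Complex.I, 0]
def σz : Matrix (Fin 2) (Fin 2) ℂ := !![1, 0; 0, -1]

def U2 : Fin 12 → Matrix (Fin 2 × Fin 2) (Fin 2 × Fin 2) ℂ :=
  ![(1 / Real.sqrt 2 : ℂ) • (σx ⊗ₖ (σx - σy)),
    (1 / Real.sqrt 2 : ℂ) • ((σx - σy) ⊗ₖ σz),
    (1 / Real.sqrt 2 : ℂ) • (σz ⊗ₖ (-σy + σz)),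
    (1 / Real.sqrt 2 : ℂ) • ((-σy + σz) ⊗ₖ σx),
    (1 / 3 : ℂ) • ((σx + σy + σz) ⊗ₖ (σx + σy + σz)),
    (1 : Matrix (Fin 2) (Fin 2) ℂ) ⊗ₖ 1, 1 ⊗ₖ σx, 1 ⊗ₖ σy, 1 ⊗ₖ σz,
    σx ⊗ₖ 1, σy ⊗ₖ 1, σz ⊗ₖ 1]

/-- Conjugate transpose distributes over Kronecker products (over ℂ). -/
lemma conjT_kron (A B : Matrix (Fin 2) (Fin 2) ℂ) :
    (A ⊗ₖ B)ᴴ = Aᴴ ⊗ₖ Bᴴ := by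
  ext ⟨i, j⟩ ⟨k, l⟩
  simp [Matrix.conjTranspose_apply, Matrix.kroneckerMap_apply, mul_comm]

/-- Scalar core: the five "interesting" orthogonality equations force one of the
Pauli-coefficient vectors to vanish. -/
lemma key5 (a1 a2 a3 b1 b2 b3 : ℂ)
    (h1 : a1 * (b1 - b2) = 0) (h2 : (a1 - a2) * b3 = 0)
    (h3 : a3 * (-b2 + b3) = 0) (h4 : (-a2 + a3) * b1 = 0)
    (h5 : (a1 + a2 + a3) * (b1 + b2 + b3) = 0) :
    (a1 = 0 ∧ a2 = 0 ∧ a3 = 0) ∨ (b1 = 0 ∧ b2 = 0 ∧ b3 = 0) := by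
  by_cases hb3 : b3 = 0
  · by_cases hb1 : b1 = 0
    · by_cases hb2 : b2 = 0
      · exact Or.inr ⟨hb1, hb2, hb3⟩
      · left
        subst hb1 hb3
        have ha1 : a1 = 0 := by
          rcases mul_eq_zero.1 h1 with h | h
          · exact h
          · exact absurd (by linear_combination -h) hb2
        have ha3 : a3 = 0 := by
          rcases mul_eq_zero.1 h3 with h | h
          · exact h
          · exact absurd (by linear_combination -h) hb2
        have ha2 : a2 = 0 := by
          rcases mul_eq_zero.1 h5 with h | h
          · linear_combination h - ha1 - ha3
          · exact absurd (by linear_combination h) hb2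
        exact ⟨ha1, ha2, ha3⟩
    · left
      subst hb3
      have h23 : a3 = a2 := by
        rcases mul_eq_zero.1 h4 with h | h
        · linear_combination h
        · exact absurd h hb1
      rcases mul_eq_zero.1 h3 with ha3 | hb2
      · have ha2 : a2 = 0 := h23 ▸ ha3
        have ha1 : a1 = 0 := by
          by_contra ha1
          have e1 : b1 = b2 := by
            rcases mul_eq_zero.1 h1 with h | h
            · exact absurd h ha1
            · linear_combination h
          have e2 : b1 + b2 = 0 := by
            rcases mul_eq_zero.1 h5 with h | h
            · exact absurd (by linear_combination h - ha2 - ha3) ha1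
            · linear_combination h
          exact hb1 (by linear_combination e2/2 + e1/2)
        exact ⟨ha1, ha2, h23.trans ha2⟩
      · have hb2' : b2 = 0 := by linear_combination -hb2
        have ha1 : a1 = 0 := by
          rcases mul_eq_zero.1 h1 with h | h
          · exact h
          · exact absurd (by linear_combination h + hb2') hb1
        have ha2 : a2 = 0 := by
          rcases mul_eq_zero.1 h5 with h | h
          · linear_combination (h - ha1 - h23)/2
          · exact absurd (by linear_combination h - hb2') hb1
        exact ⟨ha1, ha2, h23.trans ha2⟩
  · left
    have h12 : a1 = a2 := by
      rcases mul_eq_zero.1 h2 with h | h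
      · linear_combination h
      · exact absurd h hb3
    by_cases ha3 : a3 = 0
    · by_cases ha1 : a1 = 0
      · exact ⟨ha1, h12 ▸ ha1, ha3⟩
      · exfalso
        have hb12 : b1 = b2 := by
          rcases mul_eq_zero.1 h1 with h | h
          · exact absurd h ha1
          · linear_combination h
        have hb1 : b1 = 0 := by
          rcases mul_eq_zero.1 h4 with h | h
          · exact absurd (by linear_combination h12 - h + ha3) ha1
          · exact h
        have : b3 = 0 := by
          rcases mul_eq_zero.1 h5 with h | h
          · exact absurd (by linear_combination (h + h12 - ha3)/2) ha1
          · linear_combination h - 2*hb1 + hb12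
        exact hb3 this
    · have hb23 : b2 = b3 := by
        rcases mul_eq_zero.1 h3 with h | h
        · exact absurd h ha3
        · linear_combination -h
      by_cases ha1 : a1 = 0
      · exfalso
        have ha2 : a2 = 0 := h12 ▸ ha1
        have hb1 : b1 = 0 := by
          rcases mul_eq_zero.1 h4 with h | h
          · exact absurd (by linear_combination h + ha2) ha3
          · exact h
        have : b3 = 0 := by
          rcases mul_eq_zero.1 h5 with h | h
          · exact absurd (by linear_combination h - ha1 - ha2) ha3
          · linear_combination (h - hb1 - hb23)/2
        exact hb3 this
      · exfalso
        have hb12 : b1 = b2 := by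
          rcases mul_eq_zero.1 h1 with h | h
          · exact absurd h ha1
          · linear_combination h
        have e1 : a3 = -2*a1 := by
          rcases mul_eq_zero.1 h5 with h | h
          · linear_combination h + h12
          · exact absurd (by linear_combination (h - hb12 - 2*hb23)/3) hb3
        have : a1 = 0 := by
          rcases mul_eq_zero.1 h4 with h | h
          · linear_combination (-h + e1 + h12)/3
          · exact absurd (by linear_combination h - hb12 - hb23) hb3
        exact ha1 this

/-- A 2×2 complex matrix orthogonal to I, σx, σy, σz is zero. -/
lemma trace_basis (W : Matrix (Fin 2) (Fin 2) ℂ)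
    (h0 : Wᴴ.trace = 0) (h1 : (Wᴴ * σx).trace = 0)
    (h2 : (Wᴴ * σy).trace = 0) (h3 : (Wᴴ * σz).trace = 0) : W = 0 := by
  simp [Matrix.trace_fin_two, Matrix.mul_apply, Fin.sum_univ_two,
    Matrix.conjTranspose_apply, σx, σy, σz] at h0 h1 h2 h3
  have h2' : (starRingEnd ℂ) (W 1 0) - (starRingEnd ℂ) (W 0 1) = 0 := by
    linear_combination (-Complex.I) * h2 +
      ((starRingEnd ℂ) (W 1 0) - (starRingEnd ℂ) (W 0 1)) * Complex.I_sq
  ext i j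
  fin_cases i <;> fin_cases j <;>
    simp only [Matrix.zero_apply, Fin.mk_zero, Fin.mk_one] <;>
    rw [← map_eq_zero_iff (starRingEnd ℂ) (RingHom.injective _)]
  · linear_combination (h0 + h3)/2
  · linear_combination (h1 - h2')/2
  · linear_combination (h1 + h2')/2
  · linear_combination (h0 - h3)/2

theorem U2_strongly_unextendible :
    ∀ W X : Matrix (Fin 2) (Fin 2) ℂ,
      (∀ i : Fin 12, ((W ⊗ₖ X)ᴴ * U2 i).trace = 0) → W = 0 ∨ X = 0 := by
  intro W X h
  have kron : ∀ A B : Matrix (Fin 2) (Fin 2) ℂ,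
      ((W ⊗ₖ X)ᴴ * (A ⊗ₖ B)).trace = (Wᴴ * A).trace * (Xᴴ * B).trace := by
    intro A B
    rw [conjT_kron, ← Matrix.mul_kronecker_mul, Matrix.trace_kronecker]
  have s2 : (1 / (Real.sqrt 2 : ℂ)) ≠ 0 := by
    simp only [ne_eq, one_div, inv_eq_zero, Complex.ofReal_eq_zero]
    positivity
  have s3 : (1 / 3 : ℂ) ≠ 0 := by norm_num
  have E1 : (Wᴴ * σx).trace * ((Xᴴ * σx).trace - (Xᴴ * σy).trace) = 0 := by
    have e := h 0
    rw [show U2 0 = (1 / Real.sqrt 2 : ℂ) • (σx ⊗ₖ (σx - σy)) from rfl,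
      Matrix.mul_smul, Matrix.trace_smul, smul_eq_mul] at e
    have e' := (mul_eq_zero.1 e).resolve_left s2
    rwa [kron, Matrix.mul_sub, Matrix.trace_sub] at e'
  have E2 : ((Wᴴ * σx).trace - (Wᴴ * σy).trace) * (Xᴴ * σz).trace = 0 := by
    have e := h 1
    rw [show U2 1 = (1 / Real.sqrt 2 : ℂ) • ((σx - σy) ⊗ₖ σz) from rfl,
      Matrix.mul_smul, Matrix.trace_smul, smul_eq_mul] at e
    have e' := (mul_eq_zero.1 e).resolve_left s2
    rwa [kron, Matrix.mul_sub, Matrix.trace_sub] at e'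
  have E3 : (Wᴴ * σz).trace * (-(Xᴴ * σy).trace + (Xᴴ * σz).trace) = 0 := by
    have e := h 2
    rw [show U2 2 = (1 / Real.sqrt 2 : ℂ) • (σz ⊗ₖ (-σy + σz)) from rfl,
      Matrix.mul_smul, Matrix.trace_smul, smul_eq_mul] at e
    have e' := (mul_eq_zero.1 e).resolve_left s2
    rwa [kron, Matrix.mul_add, Matrix.mul_neg, Matrix.trace_add,
      Matrix.trace_neg] at e'
  have E4 : (-(Wᴴ * σy).trace + (Wᴴ * σz).trace) * (Xᴴ * σx).trace = 0 := by
    have e := h 3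
    rw [show U2 3 = (1 / Real.sqrt 2 : ℂ) • ((-σy + σz) ⊗ₖ σx) from rfl,
      Matrix.mul_smul, Matrix.trace_smul, smul_eq_mul] at e
    have e' := (mul_eq_zero.1 e).resolve_left s2
    rwa [kron, Matrix.mul_add, Matrix.mul_neg, Matrix.trace_add,
      Matrix.trace_neg] at e'
  have E5 : ((Wᴴ * σx).trace + (Wᴴ * σy).trace + (Wᴴ * σz).trace) *
      ((Xᴴ * σx).trace + (Xᴴ * σy).trace + (Xᴴ * σz).trace) = 0 := by
    have e := h 4
    rw [show U2 4 = (1 / 3 : ℂ) • ((σx + σy + σz) ⊗ₖ (σx + σy + σz)) from rfl,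
      Matrix.mul_smul, Matrix.trace_smul, smul_eq_mul] at e
    have e' := (mul_eq_zero.1 e).resolve_left s3
    rw [kron] at e'
    simp only [Matrix.mul_add, Matrix.trace_add] at e'
    exact e'
  have E6 : Wᴴ.trace * Xᴴ.trace = 0 := by
    have e := h 5
    rwa [show U2 5 = (1 : Matrix (Fin 2) (Fin 2) ℂ) ⊗ₖ 1 from rfl, kron,
      Matrix.mul_one, Matrix.mul_one] at e
  have E7 : Wᴴ.trace * (Xᴴ * σx).trace = 0 := by
    have e := h 6
    rwa [show U2 6 = (1 : Matrix (Fin 2) (Fin 2) ℂ) ⊗ₖ σx from rfl, kron,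
      Matrix.mul_one] at e
  have E8 : Wᴴ.trace * (Xᴴ * σy).trace = 0 := by
    have e := h 7
    rwa [show U2 7 = (1 : Matrix (Fin 2) (Fin 2) ℂ) ⊗ₖ σy from rfl, kron,
      Matrix.mul_one] at e
  have E9 : Wᴴ.trace * (Xᴴ * σz).trace = 0 := by
    have e := h 8
    rwa [show U2 8 = (1 : Matrix (Fin 2) (Fin 2) ℂ) ⊗ₖ σz from rfl, kron,
      Matrix.mul_one] at e
  have E10 : (Wᴴ * σx).trace * Xᴴ.trace = 0 := by
    have e := h 9
    rwa [show U2 9 = σx ⊗ₖ (1 : Matrix (Fin 2) (Fin 2) ℂ) from rfl, kron,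
      Matrix.mul_one] at e
  have E11 : (Wᴴ * σy).trace * Xᴴ.trace = 0 := by
    have e := h 10
    rwa [show U2 10 = σy ⊗ₖ (1 : Matrix (Fin 2) (Fin 2) ℂ) from rfl, kron,
      Matrix.mul_one] at e
  have E12 : (Wᴴ * σz).trace * Xᴴ.trace = 0 := by
    have e := h 11
    rwa [show U2 11 = σz ⊗ₖ (1 : Matrix (Fin 2) (Fin 2) ℂ) from rfl, kron,
      Matrix.mul_one] at e
  rcases key5 _ _ _ _ _ _ E1 E2 E3 E4 E5 with ⟨ha1, ha2, ha3⟩ | ⟨hb1, hb2, hb3⟩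
  · by_cases ha0 : Wᴴ.trace = 0
    · exact Or.inl (trace_basis W ha0 ha1 ha2 ha3)
    · refine Or.inr (trace_basis X ?_ ?_ ?_ ?_)
      · exact (mul_eq_zero.1 E6).resolve_left ha0
      · exact (mul_eq_zero.1 E7).resolve_left ha0
      · exact (mul_eq_zero.1 E8).resolve_left ha0
      · exact (mul_eq_zero.1 E9).resolve_left ha0
  · by_cases hb0 : Xᴴ.trace = 0
    · exact Or.inr (trace_basis X hb0 hb1 hb2 hb3)
    · refine Or.inl (trace_basis W ?_ ?_ ?_ ?_)
      · exact (mul_eq_zero.1 E6).resolve_right hb0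
      · exact (mul_eq_zero.1 E10).resolve_right hb0
      · exact (mul_eq_zero.1 E11).resolve_right hb0
      · exact (mul_eq_zero.1 E12).resolve_right hb0

end
end
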